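/- Let p be a prime, e ≥ 1, q = p^e, and let a, b be natural numbers with a ≥ 1 and b ≤ e−1. Then every integer n has exactly one representation n = Σ_{i=0}^{a} c_i·s_q(a,b,i) with c_0 ∈ {0,…,p^{e−b}−1}, c_i ∈ {0,…,q−1} for 1 ≤ i ≤ a−1, and c_a ∈ ℤ. -/

import Mathlib

open Finset

/-- `s_q(a,b,i)`, with `q = p^e`, written without division:
`s_q(a,b,0) = 1 + q + ⋯ + q^a` and `s_q(a,b,i) = p^{ie-b}·(1 + q + ⋯ + q^{a-i})` for `i ≥ 1`. -/
def sQ (p e a b i : ℕ) : ℕ :=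
  if i = 0 then ∑ j ∈ Finset.range (a + 1), (p ^ e) ^ j
  else p ^ (i * e - b) * ∑ j ∈ Finset.range (a - i + 1), (p ^ e) ^ j

/-- Generic mixed-radix representation with last digit free. -/
lemma gen_rep (r : ℕ) (m v : ℕ → ℤ) (hm : ∀ i, i < r → 0 < m i)
    (hv : ∀ i, i < r → m i ∣ v i - 1) (hvr : v r = 1) (n : ℤ) :
    ∃! c : Fin (r + 1) → ℤ,
      (∀ i : Fin (r + 1), (i : ℕ) < r → 0 ≤ c i ∧ c i < m (i : ℕ)) ∧
      n = ∑ i : Fin (r + 1), c i * ((∏ j ∈ Finset.range (i : ℕ), m j) * v i) := by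
  induction r generalizing m v n with
  | zero =>
    refine ⟨fun _ => n, ⟨fun i hi => absurd hi (Nat.not_lt_zero _), by simp [hvr]⟩, ?_⟩
    rintro c ⟨-, hc⟩
    funext i
    have hi : i = 0 := Fin.ext (Nat.lt_one_iff.mp i.isLt)
    subst hi
    simpa [hvr] using hc.symm
  | succ r ih =>
    have hM : (0:ℤ) < m 0 := hm 0 (Nat.succ_pos r)
    set c0 : ℤ := n % m 0 with hc0def
    have hc0b : 0 ≤ c0 ∧ c0 < m 0 := ⟨Int.emod_nonneg n (ne_of_gt hM), Int.emod_lt_of_pos n hM⟩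
    have hsum : ∀ c' : Fin (r + 2) → ℤ,
        ∑ i : Fin (r + 2), c' i * ((∏ j ∈ Finset.range (i : ℕ), m j) * v i)
          = c' 0 * v 0 + m 0 * ∑ i : Fin (r + 1),
              c' i.succ * ((∏ j ∈ Finset.range (i : ℕ), m (j + 1)) * v ((i : ℕ) + 1)) := by
      intro c'
      rw [Fin.sum_univ_succ, Finset.mul_sum]
      congr 1
      · simp
      · apply Finset.sum_congr rfl
        intro i _
        have hv : ((i.succ : Fin (r+2)) : ℕ) = (i : ℕ) + 1 := rfl
        rw [hv, Finset.prod_range_succ' (fun j => m j) (i : ℕ)]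
        ring
    -- divisibility
    have hsub : m 0 ∣ n - c0 := by
      have h := Int.mul_ediv_add_emod n (m 0)
      exact ⟨n / m 0, by linarith⟩
    have hdvd : m 0 ∣ n - c0 * v 0 := by
      have h2 : m 0 ∣ c0 * (v 0 - 1) := Dvd.dvd.mul_left (hv 0 (Nat.succ_pos r)) c0
      have : n - c0 * v 0 = (n - c0) - c0 * (v 0 - 1) := by ring
      rw [this]; exact dvd_sub hsub h2
    set n' : ℤ := (n - c0 * v 0) / m 0 with hn'def
    have hMn' : m 0 * n' = n - c0 * v 0 := Int.mul_ediv_cancel' hdvd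
    obtain ⟨d, ⟨hd1, hd2⟩, hdu⟩ := ih (fun i => m (i + 1)) (fun i => v (i + 1))
      (fun i hi => hm (i + 1) (by omega)) (fun i hi => hv (i + 1) (by omega))
      (by simpa using hvr) n'
    refine ⟨Fin.cases c0 d, ⟨?_, ?_⟩, ?_⟩
    · intro i hi
      induction i using Fin.cases with
      | zero => simpa using hc0b
      | succ j =>
        have hj : (j : ℕ) < r := by
          have : ((j.succ : Fin (r+2)) : ℕ) = (j : ℕ) + 1 := rfl
          omega
        simpa using hd1 j hj
    · rw [hsum]
      simp only [Fin.cases_zero, Fin.cases_succ]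
      rw [← hd2]
      linarith [hMn']
    · rintro c' ⟨h1', h2'⟩
      have hkey := hsum c'
      rw [← h2'] at hkey
      set S : ℤ := ∑ i : Fin (r + 1),
          c' i.succ * ((∏ j ∈ Finset.range (i : ℕ), m (j + 1)) * v ((i : ℕ) + 1)) with hSdef
      have hdvd' : m 0 ∣ n - c' 0 := by
        have h2 : m 0 ∣ c' 0 * (v 0 - 1) := Dvd.dvd.mul_left (hv 0 (Nat.succ_pos r)) _
        have h3 : m 0 ∣ n - c' 0 * v 0 := ⟨S, by linarith⟩
        have : n - c' 0 = (n - c' 0 * v 0) + c' 0 * (v 0 - 1) := by ring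
        rw [this]; exact dvd_add h3 h2
      have hc'0 : c' 0 = c0 := by
        obtain ⟨hb1, hb2⟩ := h1' 0 (Nat.succ_pos r)
        have hb2' : c' 0 < m 0 := hb2
        have hmod : c' 0 % m 0 = n % m 0 := Int.modEq_iff_dvd.mpr hdvd'
        rw [Int.emod_eq_of_lt hb1 hb2'] at hmod
        exact hmod
      have hSn' : S = n' := by
        have : m 0 * S = m 0 * n' := by rw [hMn']; rw [hc'0] at hkey; linarith
        exact mul_left_cancel₀ (ne_of_gt hM) this
      have hd' : (fun i : Fin (r+1) => c' i.succ) = d := by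
        apply hdu
        refine ⟨?_, ?_⟩
        · intro i hi
          have : ((i.succ : Fin (r+2)) : ℕ) < r + 1 := by
            have : ((i.succ : Fin (r+2)) : ℕ) = (i : ℕ) + 1 := rfl
            omega
          simpa using h1' i.succ this
        · rw [← hSn']
      funext i
      induction i using Fin.cases with
      | zero => simpa using hc'0
      | succ j =>
        have := congrFun hd' j
        simpa using this

/-- Existence and uniqueness of the `S_q(a,b)`-adic expansion of any integer:
`n = ∑_{i=0}^{a} c_i·s_q(a,b,i)` with `c_0 ∈ {0,…,p^{e-b}-1}`, `c_i ∈ {0,…,q-1}` for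
`1 ≤ i ≤ a-1`, and `c_a ∈ ℤ` arbitrary. -/
theorem stmt_1 (p e a b : ℕ) (hp : p.Prime) (he : 1 ≤ e) (ha : 1 ≤ a) (hb : b ≤ e - 1)
    (n : ℤ) :
    ∃! c : Fin (a + 1) → ℤ,
      (0 ≤ c 0 ∧ c 0 < (p : ℤ) ^ (e - b)) ∧
      (∀ i : Fin (a + 1), 1 ≤ (i : ℕ) → (i : ℕ) ≤ a - 1 → 0 ≤ c i ∧ c i < (p : ℤ) ^ e) ∧
      n = ∑ i : Fin (a + 1), c i * (sQ p e a b i : ℤ) := by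
  have hp1 : (1:ℤ) ≤ (p:ℤ) := by exact_mod_cast hp.one_lt.le
  have hbe : b ≤ e := by omega
  set m : ℕ → ℤ := fun i => (p:ℤ) ^ (if i = 0 then e - b else e) with hmdef
  set v : ℕ → ℤ := fun i => ∑ j ∈ Finset.range (a - i + 1), ((p:ℤ) ^ e) ^ j with hvdef
  have hm : ∀ i, i < a → 0 < m i := by
    intro i _
    exact pow_pos (by linarith) _
  have hqdvd : ∀ i, m i ∣ (p:ℤ) ^ e := by
    intro i
    apply pow_dvd_pow
    split <;> omega
  have hv : ∀ i, i < a → m i ∣ v i - 1 := by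
    intro i hi
    have hk : a - i + 1 = (a - i - 1) + 1 + 1 := by omega
    have : v i = (p:ℤ)^e * ∑ j ∈ Finset.range (a - i - 1 + 1), ((p:ℤ) ^ e) ^ j + 1 := by
      simp only [hvdef, hk]
      conv_lhs => rw [geom_sum_succ]
    rw [this]
    simpa using Dvd.dvd.mul_right (hqdvd i) _
  have hva : v a = 1 := by simp [hvdef]
  -- product computation
  have hprod : ∀ i, 1 ≤ i → ∏ j ∈ Finset.range i, m j = (p:ℤ) ^ (i * e - b) := by
    intro i hi
    induction i with
    | zero => omega
    | succ k ihk =>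
      rcases Nat.eq_or_lt_of_le hi with h1 | h1
      · simp [← h1, hmdef]
      · have hk1 : 1 ≤ k := by omega
        rw [Finset.prod_range_succ, ihk hk1]
        have hke : b ≤ k * e := le_trans hbe (Nat.le_mul_of_pos_left e hk1)
        have hk0 : k ≠ 0 := by omega
        have hmk : m k = (p:ℤ) ^ e := by simp [hmdef, hk0]
        rw [hmk, ← pow_add]
        have hexp : k * e - b + e = (k + 1) * e - b := by
          rw [Nat.succ_mul]; omega
        rw [hexp]
  have hw : ∀ i : Fin (a + 1),
      (sQ p e a b (i : ℕ) : ℤ) = (∏ j ∈ Finset.range (i : ℕ), m j) * v (i : ℕ) := by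
    intro i
    rcases Nat.eq_zero_or_pos (i : ℕ) with h0 | h0
    · simp [sQ, h0, hvdef]
    · have hne : (i : ℕ) ≠ 0 := by omega
      rw [hprod _ h0]
      simp only [sQ, hne, if_false, hvdef]
      push_cast
      ring
  obtain key := gen_rep a m v hm hv hva n
  refine (existsUnique_congr ?_).mpr key
  intro c
  constructor
  · rintro ⟨h0, h1, h2⟩
    refine ⟨?_, ?_⟩
    · intro i hi
      rcases Nat.eq_zero_or_pos (i : ℕ) with hz | hz
      · have : i = 0 := Fin.ext hz
        subst this
        simpa [hmdef, hz] using h0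
      · have hia : (i : ℕ) ≤ a - 1 := by omega
        have hne : (i : ℕ) ≠ 0 := by omega
        simpa [hmdef, hne] using h1 i hz hia
    · rw [h2]
      exact Finset.sum_congr rfl fun i _ => by rw [hw i]
  · rintro ⟨h1, h2⟩
    refine ⟨?_, ?_, ?_⟩
    · simpa [hmdef] using h1 0 (by simp; omega)
    · intro i hi1 hi2
      have hia : (i : ℕ) < a := by omega
      have hne : (i : ℕ) ≠ 0 := by omega
      simpa [hmdef, hne] using h1 i hia
    · rw [h2]
      exact Finset.sum_congr rfl fun i _ => by rw [hw i]
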